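/- Let n ≥ 1 and let F : (0, ∞) → ℝ be differentiable and satisfy F'(t) ≥ (2/n) F(t)² for all t > 0. Then −n/(2t) ≤ F(t) ≤ 0 for all t > 0. -/

import Mathlib

open Set

lemma mono_aux {H H' : ℝ → ℝ} {s : Set ℝ} (hs : Convex ℝ s)
    (hH : ∀ t ∈ s, HasDerivAt H (H' t) t) (hpos : ∀ t ∈ s, 0 ≤ H' t) :
    MonotoneOn H s := by
  apply monotoneOn_of_deriv_nonneg hs
  · exact fun t ht => (hH t ht).continuousAt.continuousWithinAt
  · exact fun t ht =>
      ((hH t (interior_subset ht)).differentiableAt).differentiableWithinAt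
  · intro t ht
    rw [(hH t (interior_subset ht)).deriv]
    exact hpos t (interior_subset ht)

/-- ODE comparison: if `F` is differentiable on `(0,∞)` with
`F' ≥ (2/n) F²` there, then `-n/(2t) ≤ F t ≤ 0` for all `t > 0`. -/
theorem stmt_0 (n : ℝ) (hn : 1 ≤ n) (F F' : ℝ → ℝ)
    (hderiv : ∀ t ∈ Ioi (0 : ℝ), HasDerivAt F (F' t) t)
    (hineq : ∀ t ∈ Ioi (0 : ℝ), (2 / n) * (F t) ^ 2 ≤ F' t) :
    ∀ t ∈ Ioi (0 : ℝ), -n / (2 * t) ≤ F t ∧ F t ≤ 0 := by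
  have hn0 : (0:ℝ) < n := lt_of_lt_of_le one_pos hn
  have hF'nonneg : ∀ t ∈ Ioi (0:ℝ), 0 ≤ F' t := by
    intro t ht
    refine le_trans ?_ (hineq t ht)
    positivity
  -- upper bound : F ≤ 0 on (0,∞)
  have hF0 : ∀ t ∈ Ioi (0:ℝ), F t ≤ 0 := by
    intro s hs
    simp only [mem_Ioi] at hs
    by_contra hc
    push_neg at hc
    have hIci : Ici s ⊆ Ioi (0:ℝ) := fun t ht => lt_of_lt_of_le hs ht
    have hmonoF : MonotoneOn F (Ici s) :=
      mono_aux (convex_Ici s) (fun t ht => hderiv t (hIci ht))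
        (fun t ht => hF'nonneg t (hIci ht))
    have hFpos : ∀ t ∈ Ici s, 0 < F t := fun t ht =>
      lt_of_lt_of_le hc (hmonoF self_mem_Ici ht ht)
    -- G := -(F)⁻¹ - (2/n) t
    set G : ℝ → ℝ := fun t => -(F t)⁻¹ - (2/n) * t with hGdef
    have hGderiv : ∀ t ∈ Ici s, HasDerivAt G (F' t / (F t)^2 - 2/n) t := by
      intro t ht
      have hne : F t ≠ 0 := ne_of_gt (hFpos t ht)
      have h1 := (((hderiv t (hIci ht)).inv hne).neg.sub
        ((hasDerivAt_id t).const_mul (2/n)))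
      exact h1.congr_deriv (by ring)
    have hGnn : ∀ t ∈ Ici s, 0 ≤ F' t / (F t)^2 - 2/n := by
      intro t ht
      have hp : 0 < (F t)^2 := pow_pos (hFpos t ht) 2
      have := hineq t (hIci ht)
      rw [sub_nonneg, le_div_iff₀ hp]
      linarith
    have hmonoG : MonotoneOn G (Ici s) :=
      mono_aux (convex_Ici s) hGderiv hGnn
    set T : ℝ := s + n / F s with hT
    have hTs : s ≤ T := by
      have : 0 < n / F s := div_pos hn0 (hFpos s self_mem_Ici)
      rw [hT]; linarith
    have hkey := hmonoG self_mem_Ici (mem_Ici.mpr hTs) hTs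
    have ha : 0 < F s := hFpos s self_mem_Ici
    have hb : 0 < F T := hFpos T (mem_Ici.mpr hTs)
    have hbi : 0 < (F T)⁻¹ := inv_pos.mpr hb
    have hai : 0 < (F s)⁻¹ := inv_pos.mpr ha
    -- G s ≤ G T  means  -(F s)⁻¹ - (2/n) s ≤ -(F T)⁻¹ - (2/n)(s + n / F s)
    simp only [hGdef, hT] at hkey
    have h2 : (2/n) * (s + n / F s) = (2/n) * s + 2 * (F s)⁻¹ := by
      field_simp
    rw [h2] at hkey
    -- now : -(F s)⁻¹ - (2/n) s ≤ -(F T)⁻¹ - ((2/n) s + 2 (F s)⁻¹)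
    nlinarith [hbi, hai]
  -- lower bound
  intro t₀ ht₀
  refine ⟨?_, hF0 t₀ ht₀⟩
  simp only [mem_Ioi] at ht₀
  by_contra hc
  push_neg at hc
  have he : -n / (2 * t₀) = -(n / (2 * t₀)) := neg_div _ _
  have hmn : 0 < n / (2 * t₀) := div_pos hn0 (by linarith)
  have hFt₀neg : F t₀ < 0 := by linarith
  set a : ℝ := -(F t₀)⁻¹ with hadef
  clear_value a
  have ha0 : 0 < a := by
    have : (F t₀)⁻¹ < 0 := inv_neg''.mpr hFt₀neg
    simp only [hadef]; linarith
  have han : a < 2 * t₀ / n := by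
    have h1 : n / (2 * t₀) < -F t₀ := by linarith
    have h3 : (-F t₀)⁻¹ < (n / (2 * t₀))⁻¹ := inv_strictAnti₀ hmn h1
    rw [inv_div] at h3
    simpa [hadef, inv_neg] using h3
  set t₁ : ℝ := (t₀ - (n/2) * a) / 2 with ht₁
  clear_value t₁
  have ht₁pos : 0 < t₁ := by
    have : n * a < 2 * t₀ := by
      rw [lt_div_iff₀ hn0] at han
      linarith
    have h4 : n / 2 * a = n * a / 2 := by ring
    simp only [ht₁]
    linarith
  have ht₁lt : t₁ < t₀ := by
    have : 0 < (n/2) * a := by positivity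
    simp only [ht₁]; linarith
  have hIcc : Icc t₁ t₀ ⊆ Ioi (0:ℝ) := fun t ht => lt_of_lt_of_le ht₁pos ht.1
  have hmonoF : MonotoneOn F (Icc t₁ t₀) :=
    mono_aux (convex_Icc t₁ t₀) (fun t ht => hderiv t (hIcc ht))
      (fun t ht => hF'nonneg t (hIcc ht))
  have hFneg : ∀ t ∈ Icc t₁ t₀, F t < 0 := fun t ht =>
    lt_of_le_of_lt (hmonoF ht (right_mem_Icc.mpr ht₁lt.le) ht.2) hFt₀neg
  set G : ℝ → ℝ := fun t => -(F t)⁻¹ - (2/n) * t with hGdef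
  have hGderiv : ∀ t ∈ Icc t₁ t₀, HasDerivAt G (F' t / (F t)^2 - 2/n) t := by
    intro t ht
    have hne : F t ≠ 0 := ne_of_lt (hFneg t ht)
    have h1 := (((hderiv t (hIcc ht)).inv hne).neg.sub
      ((hasDerivAt_id t).const_mul (2/n)))
    exact h1.congr_deriv (by ring)
  have hGnn : ∀ t ∈ Icc t₁ t₀, 0 ≤ F' t / (F t)^2 - 2/n := by
    intro t ht
    have hp : 0 < (F t)^2 := by
      have h := hFneg t ht; nlinarith
    have := hineq t (hIcc ht)
    rw [sub_nonneg, le_div_iff₀ hp]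
    linarith
  have hmonoG : MonotoneOn G (Icc t₁ t₀) :=
    mono_aux (convex_Icc t₁ t₀) hGderiv hGnn
  have hkey := hmonoG (left_mem_Icc.mpr ht₁lt.le) (right_mem_Icc.mpr ht₁lt.le)
    ht₁lt.le
  simp only [hGdef] at hkey
  -- -(F t₁)⁻¹ - (2/n) t₁ ≤ a - (2/n) t₀
  have hF1 : 0 < -(F t₁)⁻¹ := by
    have : (F t₁)⁻¹ < 0 := inv_neg''.mpr (hFneg t₁ (left_mem_Icc.mpr ht₁lt.le))
    linarith
  -- from hkey : -(F t₁)⁻¹ ≤ a - (2/n)(t₀ - t₁)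
  have hna : n * a < 2 * t₀ := by
    rw [lt_div_iff₀ hn0] at han; linarith
  have hq : (2/n) * (t₀ - t₁) = t₀ / n + a / 2 := by
    simp only [ht₁]
    field_simp
    ring
  have hlt : a/2 - t₀/n < 0 := by
    rw [div_sub_div _ _ (two_ne_zero) (ne_of_gt hn0), div_neg_iff]
    right
    constructor <;> nlinarith
  nlinarith [hkey, hF1, hq, hlt]
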